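/- (Gentle measurement corollary) Let ρ be a density operator on H₁ ⊗ H₂ and π = |φ⟩⟨φ| a pure state on H₁. If Tr(π · Tr₂(ρ)) ≥ 1 - δ for some δ ≥ 0, then TD(ρ, π ⊗ Tr₁(ρ)) ≤ 2√δ + δ. -/

import Mathlib

open Matrix ComplexOrder Kronecker

/-- The trace distance TD(ρ,σ) = (1/2)Tr|ρ-σ|, where |A| = √(Aᴴ A). -/
noncomputable def traceDist {n : Type*} [Fintype n] [DecidableEq n]
    (ρ σ : Matrix n n ℂ) : ℝ :=
  (1 / 2) * (((Matrix.posSemidef_conjTranspose_mul_self (ρ - σ)).1.eigenvectorUnitary.1 *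
    Matrix.diagonal (((↑) : ℝ → ℂ) ∘ Real.sqrt ∘
      (Matrix.posSemidef_conjTranspose_mul_self (ρ - σ)).1.eigenvalues) *
    (star (Matrix.posSemidef_conjTranspose_mul_self (ρ - σ)).1.eigenvectorUnitary :
      Matrix n n ℂ)).trace).re

/-- Partial trace over the second tensor factor. -/
noncomputable def ptrace2 {m k : Type*} [Fintype k]
    (ρ : Matrix (m × k) (m × k) ℂ) : Matrix m m ℂ :=
  Matrix.of fun i j => ∑ a : k, ρ (i, a) (j, a)

/-- Partial trace over the first tensor factor. -/
noncomputable def ptrace1 {m k : Type*} [Fintype m]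
    (ρ : Matrix (m × k) (m × k) ℂ) : Matrix k k ℂ :=
  Matrix.of fun i j => ∑ a : m, ρ (a, i) (a, j)

set_option linter.unusedSectionVars false
set_option maxHeartbeats 1000000

section psdsqrt
open scoped MatrixOrder
variable {n : Type*} [Fintype n] [DecidableEq n]

noncomputable def Matrix.PosSemidef.sqrt {A : Matrix n n ℂ} (hA : A.PosSemidef) : Matrix n n ℂ :=
  hA.1.eigenvectorUnitary.1 * Matrix.diagonal (((↑) : ℝ → ℂ) ∘ Real.sqrt ∘ hA.1.eigenvalues) *
    (star hA.1.eigenvectorUnitary : Matrix n n ℂ)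

lemma Matrix.PosSemidef.posSemidef_sqrt {A : Matrix n n ℂ} (hA : A.PosSemidef) :
    hA.sqrt.PosSemidef := by
  have hd : (Matrix.diagonal (((↑) : ℝ → ℂ) ∘ Real.sqrt ∘ hA.1.eigenvalues)).PosSemidef :=
    Matrix.PosSemidef.diagonal (fun i => by simpa using Complex.zero_le_real.2 (Real.sqrt_nonneg _))
  have := hd.mul_mul_conjTranspose_same (hA.1.eigenvectorUnitary : Matrix n n ℂ)
  rwa [← Matrix.star_eq_conjTranspose] at this

lemma Matrix.PosSemidef.sqrt_mul_self {A : Matrix n n ℂ} (hA : A.PosSemidef) :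
    hA.sqrt * hA.sqrt = A := by
  have hU := Unitary.coe_star_mul_self hA.1.eigenvectorUnitary
  have hD : Matrix.diagonal (((↑) : ℝ → ℂ) ∘ Real.sqrt ∘ hA.1.eigenvalues) *
      Matrix.diagonal (((↑) : ℝ → ℂ) ∘ Real.sqrt ∘ hA.1.eigenvalues)
      = Matrix.diagonal (RCLike.ofReal ∘ hA.1.eigenvalues) := by
    rw [Matrix.diagonal_mul_diagonal]
    congr 1
    ext i
    simp only [Function.comp_apply]
    rw [← Complex.ofReal_mul, Real.mul_self_sqrt (hA.eigenvalues_nonneg i)]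
    rfl
  conv_rhs => rw [hA.1.spectral_theorem, Unitary.conjStarAlgAut_apply]
  unfold Matrix.PosSemidef.sqrt
  calc _ = (hA.1.eigenvectorUnitary : Matrix n n ℂ) *
        Matrix.diagonal (((↑) : ℝ → ℂ) ∘ Real.sqrt ∘ hA.1.eigenvalues) *
        ((star hA.1.eigenvectorUnitary : Matrix n n ℂ) * hA.1.eigenvectorUnitary) *
        (Matrix.diagonal (((↑) : ℝ → ℂ) ∘ Real.sqrt ∘ hA.1.eigenvalues) *
        (star hA.1.eigenvectorUnitary : Matrix n n ℂ)) := by simp only [Matrix.mul_assoc]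
    _ = _ := by rw [hU, Matrix.mul_one, ← hD]; simp only [Matrix.mul_assoc]

lemma Matrix.PosSemidef.eq_sqrt_of_sq_eq {B : Matrix n n ℂ} (hB : B.PosSemidef) {A : Matrix n n ℂ}
    (hA : A.PosSemidef) (h : B ^ 2 = A) : B = hA.sqrt := by
  have h1 : CFC.sqrt A = B :=
    CFC.sqrt_unique (by rw [← sq]; exact h) (Matrix.nonneg_iff_posSemidef.mpr hB)
  have h2 : CFC.sqrt A = hA.sqrt :=
    CFC.sqrt_unique hA.sqrt_mul_self (Matrix.nonneg_iff_posSemidef.mpr hA.posSemidef_sqrt)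
  rw [← h1, h2]

end psdsqrt

section aux

variable {n : Type*} [Fintype n] [DecidableEq n]

lemma psd_trace_re_nonneg {A : Matrix n n ℂ} (hA : A.PosSemidef) : 0 ≤ A.trace.re := by
  have h : ∀ i, 0 ≤ (A i i).re := by
    intro i
    have := hA.dotProduct_mulVec_nonneg (Pi.single i 1)
    have e : star (Pi.single i 1) ⬝ᵥ A *ᵥ Pi.single i 1 = A i i := by
      simp [dotProduct, Matrix.mulVec_single, Pi.single_apply]
    rw [e] at this
    simpa using this.1
  rw [Matrix.trace]
  simpa [Matrix.diag] using Finset.sum_nonneg fun i (_ : i ∈ Finset.univ) => h i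

lemma psd_mul_trace_re_nonneg {A B : Matrix n n ℂ} (hA : A.PosSemidef) (hB : B.PosSemidef) :
    0 ≤ (A * B).trace.re := by
  obtain ⟨S, hS, hS1, hS2⟩ : ∃ S : Matrix n n ℂ, S.PosSemidef ∧ Sᴴ = S ∧ S * S = B :=
    ⟨hB.sqrt, hB.posSemidef_sqrt, hB.posSemidef_sqrt.1, hB.sqrt_mul_self⟩
  have key : (A * B).trace = (S * A * S).trace := by
    rw [← hS2, ← Matrix.mul_assoc, Matrix.trace_mul_comm, ← Matrix.mul_assoc]
  rw [key]
  have : (S * A * S).PosSemidef := by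
    have := hA.mul_mul_conjTranspose_same S
    rwa [hS1] at this
  exact psd_trace_re_nonneg this

lemma trace_cs (A B : Matrix n n ℂ) :
    ((Aᴴ * B).trace).re ≤ Real.sqrt ((Aᴴ * A).trace.re) * Real.sqrt ((Bᴴ * B).trace.re) := by
  classical
  set f : EuclideanSpace ℂ (n × n) := WithLp.toLp 2 (fun p : n × n => A p.2 p.1) with hf
  set g : EuclideanSpace ℂ (n × n) := WithLp.toLp 2 (fun p : n × n => B p.2 p.1) with hg
  have hinner : (Aᴴ * B).trace = @inner ℂ _ _ f g := by
    rw [Matrix.trace]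
    simp only [Matrix.diag, Matrix.mul_apply, Matrix.conjTranspose_apply]
    rw [PiLp.inner_apply]
    rw [← Finset.sum_product']
    simp [RCLike.inner_apply, Finset.univ_product_univ, hf, hg]
    exact Finset.sum_congr rfl fun _ _ => mul_comm _ _
  have key : ∀ C : Matrix n n ℂ, (Cᴴ * C).trace.re = ∑ p : n × n, ‖C p.2 p.1‖ ^ 2 := by
    intro C
    rw [Matrix.trace]
    simp only [Matrix.diag, Matrix.mul_apply, Matrix.conjTranspose_apply]
    rw [← Finset.sum_product', Finset.univ_product_univ, Complex.re_sum]
    apply Finset.sum_congr rfl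
    intro p _
    rw [show star (C p.2 p.1) * C p.2 p.1 = ((Complex.normSq (C p.2 p.1) : ℝ) : ℂ) by
      rw [Complex.star_def, Complex.normSq_eq_conj_mul_self]]
    rw [Complex.ofReal_re, Complex.normSq_eq_norm_sq]
  have hA2 : (Aᴴ * A).trace.re = ‖f‖ ^ 2 := by
    rw [key, EuclideanSpace.norm_eq, Real.sq_sqrt (by positivity)]
  have hB2 : (Bᴴ * B).trace.re = ‖g‖ ^ 2 := by
    rw [key, EuclideanSpace.norm_eq, Real.sq_sqrt (by positivity)]
  rw [hinner, hA2, hB2, Real.sqrt_sq (norm_nonneg _), Real.sqrt_sq (norm_nonneg _)]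
  calc (@inner ℂ _ _ f g).re ≤ ‖(@inner ℂ _ _ f g)‖ := Complex.re_le_norm _
    _ ≤ ‖f‖ * ‖g‖ := norm_inner_le_norm f g

lemma exists_test (H : Matrix n n ℂ) (hH : H.IsHermitian) (htr : H.trace = 0) :
    ∃ M : Matrix n n ℂ, M.PosSemidef ∧ ((1 : Matrix n n ℂ) - M).PosSemidef ∧ M * M = M ∧
      ((Matrix.posSemidef_conjTranspose_mul_self H).sqrt.trace).re = 2 * ((M * H).trace).re := by
  classical
  set V : Matrix n n ℂ := (Matrix.IsHermitian.eigenvectorUnitary hH : Matrix n n ℂ) with hVdef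
  have hV : Vᴴ * V = 1 := by
    rw [← Matrix.star_eq_conjTranspose]
    exact Unitary.coe_star_mul_self (Matrix.IsHermitian.eigenvectorUnitary hH)
  have hV' : V * Vᴴ = 1 := by
    rw [← Matrix.star_eq_conjTranspose]
    exact Unitary.coe_mul_star_self (Matrix.IsHermitian.eigenvectorUnitary hH)
  set lam := hH.eigenvalues with hlam
  set c : (n → ℝ) → Matrix n n ℂ := fun r => V * Matrix.diagonal (fun i => ((r i : ℝ) : ℂ)) * Vᴴ
    with hc
  have hmul : ∀ r s : n → ℝ, c r * c s = c (r * s) := by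
    intro r s
    simp only [hc]
    calc V * Matrix.diagonal (fun i => ((r i : ℝ) : ℂ)) * Vᴴ *
        (V * Matrix.diagonal (fun i => ((s i : ℝ) : ℂ)) * Vᴴ)
        = V * Matrix.diagonal (fun i => ((r i : ℝ) : ℂ)) * (Vᴴ * V) *
          (Matrix.diagonal (fun i => ((s i : ℝ) : ℂ)) * Vᴴ) := by
          simp only [Matrix.mul_assoc]
      _ = V * (Matrix.diagonal (fun i => ((r i : ℝ) : ℂ)) *
            Matrix.diagonal (fun i => ((s i : ℝ) : ℂ))) * Vᴴ := by
          rw [hV]; simp only [Matrix.mul_one, Matrix.mul_assoc]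
      _ = V * Matrix.diagonal (fun i => (((r * s) i : ℝ) : ℂ)) * Vᴴ := by
          rw [Matrix.diagonal_mul_diagonal]
          congr 1
          ext i
          simp
  have htrace : ∀ r : n → ℝ, (c r).trace.re = ∑ i, r i := by
    intro r
    simp only [hc]
    rw [Matrix.trace_mul_comm, ← Matrix.mul_assoc, hV, Matrix.one_mul, Matrix.trace_diagonal]
    rw [Complex.re_sum]
    simp
  have hpsd : ∀ r : n → ℝ, (0 ≤ r) → (c r).PosSemidef := by
    intro r hr
    exact (Matrix.PosSemidef.diagonal (fun i => by
      simpa using Complex.zero_le_real.2 (hr i))).mul_mul_conjTranspose_same V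
  have hspec : H = c lam := by
    exact hH.spectral_theorem.trans (by rw [Unitary.conjStarAlgAut_apply]; rfl)
  set d : n → ℝ := fun i => if 0 < lam i then 1 else 0 with hd
  refine ⟨c d, hpsd d ?_, ?_, ?_, ?_⟩
  · intro i; simp only [hd]; split <;> norm_num
  · have hone : c 1 = 1 := by
      simp only [hc]
      norm_num [Matrix.diagonal_one, hV']
    have : (1 : Matrix n n ℂ) - c d = c (1 - d) := by
      rw [← hone]
      simp only [hc]
      rw [← Matrix.sub_mul, ← Matrix.mul_sub]
      congr 1
      congr 1
      rw [Matrix.diagonal_sub]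
      congr 1
      ext i
      simp
    rw [this]
    apply hpsd
    intro i
    simp only [hd, Pi.sub_apply, Pi.one_apply]
    split <;> norm_num
  · have hdd : d * d = d := by
      funext i
      simp only [hd, Pi.mul_apply]
      split <;> norm_num
    rw [hmul, hdd]
  · have habs : (c (fun i => |lam i|)).PosSemidef := hpsd _ (fun i => abs_nonneg _)
    have hsq : (c (fun i => |lam i|)) ^ 2 = Hᴴ * H := by
      have habs2 : (fun i => |lam i|) * (fun i => |lam i|) = lam * lam := by
        funext i
        simp only [Pi.mul_apply]
        exact abs_mul_abs_self _
      rw [pow_two, Matrix.IsHermitian.eq hH, hspec, hmul, hmul, habs2]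
    have hsqrt : c (fun i => |lam i|) = (Matrix.posSemidef_conjTranspose_mul_self H).sqrt :=
      habs.eq_sqrt_of_sq_eq _ hsq
    have hMH : c d * H = c (d * lam) := by rw [hspec, hmul]
    have hsum : ∑ i, lam i = 0 := by
      have := congrArg Complex.re (hspec ▸ htr)
      rwa [htrace] at this
    rw [← hsqrt, hMH, htrace, htrace]
    have : ∀ i, |lam i| = 2 * (d * lam) i - lam i := by
      intro i
      simp only [hd, Pi.mul_apply]
      rcases lt_or_ge 0 (lam i) with h | h
      · rw [if_pos h, abs_of_pos h]; ring
      · rw [if_neg (not_lt.2 h), abs_of_nonpos h]; ring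
    rw [Finset.sum_congr rfl (fun i _ => this i)]
    rw [Finset.sum_sub_distrib, hsum, sub_zero, ← Finset.mul_sum]

end aux

section kron

/-- The "sandwiched" operator ⟨φ| ρ |φ⟩ on the second factor. -/
noncomputable def sig {m k : Type*} [Fintype m] [Fintype k] (φ : m → ℂ)
    (ρ : Matrix (m × k) (m × k) ℂ) : Matrix k k ℂ :=
  Matrix.of fun a b => ∑ i : m, ∑ j : m, (starRingEnd ℂ) (φ i) * ρ (i, a) (j, b) * φ j

variable {m k : Type*} [Fintype m] [Fintype k] [DecidableEq m] [DecidableEq k]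

lemma kron_conjTranspose (A : Matrix m m ℂ) (B : Matrix k k ℂ) :
    (A ⊗ₖ B)ᴴ = Aᴴ ⊗ₖ Bᴴ := by
  ext ⟨i, a⟩ ⟨j, b⟩
  simp [Matrix.conjTranspose_apply, Matrix.kroneckerMap_apply, mul_comm]

lemma kron_sub (A : Matrix m m ℂ) (B C : Matrix k k ℂ) :
    A ⊗ₖ (B - C) = A ⊗ₖ B - A ⊗ₖ C := by
  ext ⟨i, a⟩ ⟨j, b⟩
  simp [Matrix.kroneckerMap_apply, mul_sub]

lemma kron_psd {A : Matrix m m ℂ} {B : Matrix k k ℂ}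
    (hA : A.PosSemidef) (hB : B.PosSemidef) : (A ⊗ₖ B).PosSemidef := by
  exact hA.kronecker hB

lemma ptrace1_psd {K : Matrix (m × k) (m × k) ℂ} (hK : K.PosSemidef) :
    (ptrace1 K).PosSemidef := by
  refine Matrix.PosSemidef.of_dotProduct_mulVec_nonneg ?_ ?_
  · ext a b
    simp only [ptrace1, Matrix.conjTranspose_apply, Matrix.of_apply, star_sum]
    exact Finset.sum_congr rfl fun i _ => congrFun (congrFun hK.1 (i, a)) (i, b)
  · intro x
    have hterm : ∀ i : m, star (fun p : m × k => if p.1 = i then x p.2 else 0) ⬝ᵥ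
        K *ᵥ (fun p : m × k => if p.1 = i then x p.2 else 0)
        = ∑ a : k, ∑ b : k, star (x a) * (K (i, a) (i, b) * x b) := by
      intro i
      simp [dotProduct, Matrix.mulVec, Fintype.sum_prod_type, apply_ite (starRingEnd ℂ),
        ite_mul, mul_ite, Finset.mul_sum, Finset.sum_ite_irrel, Finset.sum_ite_eq',
        Finset.sum_ite_eq]
    have key : star x ⬝ᵥ (ptrace1 K) *ᵥ x
        = ∑ i : m, ∑ a : k, ∑ b : k, star (x a) * (K (i, a) (i, b) * x b) := by
      simp only [dotProduct, Matrix.mulVec, ptrace1, Matrix.of_apply, Pi.star_apply,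
        Finset.mul_sum, Finset.sum_mul]
      rw [Finset.sum_comm]
      refine Eq.trans (Finset.sum_congr rfl fun a _ => Finset.sum_comm) ?_
      rw [Finset.sum_comm]
      apply Finset.sum_congr rfl
      intro i _
      refine Eq.trans Finset.sum_comm ?_
      apply Finset.sum_congr rfl
      intro a _
      apply Finset.sum_congr rfl
      intro b _
      ring
    rw [key]
    apply Finset.sum_nonneg
    intro i _
    rw [← hterm i]
    exact hK.dotProduct_mulVec_nonneg _

lemma ptrace1_trace (ρ : Matrix (m × k) (m × k) ℂ) : (ptrace1 ρ).trace = ρ.trace := by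
  rw [Matrix.trace, Matrix.trace]
  simp only [Matrix.diag, ptrace1, Matrix.of_apply]
  rw [Fintype.sum_prod_type, Finset.sum_comm]

lemma ptrace1_sub (X Y : Matrix (m × k) (m × k) ℂ) :
    ptrace1 (X - Y) = ptrace1 X - ptrace1 Y := by
  ext a b
  simp [ptrace1, Finset.sum_sub_distrib]

lemma ptrace1_kron (A : Matrix m m ℂ) (B : Matrix k k ℂ) :
    ptrace1 (A ⊗ₖ B) = A.trace • B := by
  ext a b
  simp [ptrace1, Matrix.kroneckerMap_apply, Matrix.trace, Matrix.diag, Finset.sum_mul]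

variable (φ : m → ℂ) (ρ : Matrix (m × k) (m × k) ℂ)

lemma pi_herm : (Matrix.vecMulVec φ (star φ))ᴴ = Matrix.vecMulVec φ (star φ) := by
  ext i j
  simp [Matrix.conjTranspose_apply, Matrix.vecMulVec_apply, mul_comm]

lemma pi_psd : (Matrix.vecMulVec φ (star φ)).PosSemidef := by
  exact Matrix.posSemidef_vecMulVec_self_star φ

lemma pi_trace (hφ : star φ ⬝ᵥ φ = 1) : (Matrix.vecMulVec φ (star φ)).trace = 1 := by
  rw [Matrix.trace]
  simp only [Matrix.diag, Matrix.vecMulVec_apply, Pi.star_apply]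
  rw [← hφ, dotProduct]
  exact Finset.sum_congr rfl fun i _ => mul_comm _ _

lemma pi_mul_pi (hφ : star φ ⬝ᵥ φ = 1) :
    Matrix.vecMulVec φ (star φ) * Matrix.vecMulVec φ (star φ) = Matrix.vecMulVec φ (star φ) := by
  ext i j
  simp only [Matrix.mul_apply, Matrix.vecMulVec_apply, Pi.star_apply]
  have : ∑ l : m, φ i * star (φ l) * (φ l * star (φ j))
      = (φ i * star (φ j)) * ∑ l : m, star (φ l) * φ l := by
    rw [Finset.mul_sum]; exact Finset.sum_congr rfl fun l _ => by ring
  rw [this, show ∑ l : m, star (φ l) * φ l = 1 from hφ ▸ rfl, mul_one]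

lemma sandwich_eq : (Matrix.vecMulVec φ (star φ) ⊗ₖ (1 : Matrix k k ℂ)) * ρ
    * (Matrix.vecMulVec φ (star φ) ⊗ₖ (1 : Matrix k k ℂ))
    = Matrix.vecMulVec φ (star φ) ⊗ₖ sig φ ρ := by
  ext ⟨i, a⟩ ⟨j, b⟩
  simp [Matrix.mul_apply, Matrix.kroneckerMap_apply, Matrix.vecMulVec_apply, Matrix.one_apply,
    Fintype.sum_prod_type, ite_mul, mul_ite, Finset.sum_ite_irrel, Finset.sum_ite_eq,
    Finset.sum_ite_eq', Finset.mul_sum, Finset.sum_mul, sig]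
  rw [Finset.sum_comm]
  apply Finset.sum_congr rfl
  intro p _
  apply Finset.sum_congr rfl
  intro q _
  ring

lemma ptrace1_P_mul :
    ptrace1 ((Matrix.vecMulVec φ (star φ) ⊗ₖ (1 : Matrix k k ℂ)) * ρ) = sig φ ρ := by
  ext a b
  simp [ptrace1, Matrix.mul_apply, Matrix.kroneckerMap_apply, Matrix.vecMulVec_apply,
    Matrix.one_apply, Fintype.sum_prod_type, ite_mul, mul_ite, Finset.sum_ite_irrel,
    Finset.sum_ite_eq, Finset.sum_ite_eq', Finset.mul_sum, Finset.sum_mul, sig]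
  rw [Finset.sum_comm]
  apply Finset.sum_congr rfl
  intro p _
  apply Finset.sum_congr rfl
  intro q _
  ring

lemma ptrace1_mul_P :
    ptrace1 (ρ * (Matrix.vecMulVec φ (star φ) ⊗ₖ (1 : Matrix k k ℂ))) = sig φ ρ := by
  ext a b
  simp [ptrace1, Matrix.mul_apply, Matrix.kroneckerMap_apply, Matrix.vecMulVec_apply,
    Matrix.one_apply, Fintype.sum_prod_type, ite_mul, mul_ite, Finset.sum_ite_irrel,
    Finset.sum_ite_eq, Finset.sum_ite_eq', Finset.mul_sum, Finset.sum_mul, sig]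
  apply Finset.sum_congr rfl
  intro p _
  apply Finset.sum_congr rfl
  intro q _
  ring

lemma trace_P_mul : ((Matrix.vecMulVec φ (star φ) ⊗ₖ (1 : Matrix k k ℂ)) * ρ).trace
    = (Matrix.vecMulVec φ (star φ) * ptrace2 ρ).trace := by
  rw [Matrix.trace, Matrix.trace]
  simp [Matrix.diag, Matrix.mul_apply, Matrix.kroneckerMap_apply, Matrix.vecMulVec_apply,
    Matrix.one_apply, Fintype.sum_prod_type, ite_mul, mul_ite, Finset.sum_ite_irrel,
    Finset.sum_ite_eq, Finset.sum_ite_eq', Finset.mul_sum, Finset.sum_mul, ptrace2]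
  have swap2 : ∀ f : k → m → ℂ, (∑ y : k, ∑ z : m, f y z) = ∑ z : m, ∑ y : k, f y z :=
    fun f => Finset.sum_comm
  have swap3 : ∀ f : k → m → m → ℂ,
      (∑ y : k, ∑ x : m, ∑ z : m, f y x z) = ∑ x : m, ∑ z : m, ∑ y : k, f y x z := by
    intro f
    rw [Finset.sum_comm]
    apply Finset.sum_congr rfl
    intro x _
    rw [Finset.sum_comm]
  first
  | exact Finset.sum_congr rfl fun p _ => swap2 _
  | exact swap3 _
  | (rw [Finset.sum_comm]; exact Finset.sum_congr rfl fun p _ => swap2 _)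

end kron

theorem stmt_14 {d₁ d₂ : ℕ}
    (ρ : Matrix (Fin d₁ × Fin d₂) (Fin d₁ × Fin d₂) ℂ)
    (hρ : ρ.PosSemidef) (htr : ρ.trace = 1)
    (φ : Fin d₁ → ℂ) (hφ : star φ ⬝ᵥ φ = 1) (δ : ℝ) (hδ : 0 ≤ δ)
    (h : 1 - δ ≤ ((Matrix.vecMulVec φ (star φ) * ptrace2 ρ).trace).re) :
    traceDist ρ (Matrix.vecMulVec φ (star φ) ⊗ₖ ptrace1 ρ)
      ≤ 2 * Real.sqrt δ + δ := by
  classical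
  set Pi1 : Matrix (Fin d₁) (Fin d₁) ℂ := Matrix.vecMulVec φ (star φ) with hPi1
  set P : Matrix (Fin d₁ × Fin d₂) (Fin d₁ × Fin d₂) ℂ := Pi1 ⊗ₖ (1 : Matrix (Fin d₂) (Fin d₂) ℂ)
    with hP
  set Q : Matrix (Fin d₁ × Fin d₂) (Fin d₁ × Fin d₂) ℂ := 1 - P with hQ
  set σ₂ : Matrix (Fin d₂) (Fin d₂) ℂ := ptrace1 ρ with hσ₂
  set σ : Matrix (Fin d₁ × Fin d₂) (Fin d₁ × Fin d₂) ℂ := Pi1 ⊗ₖ σ₂ with hσ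
  set st : Matrix (Fin d₂) (Fin d₂) ℂ := sig φ ρ with hst
  set R : Matrix (Fin d₁ × Fin d₂) (Fin d₁ × Fin d₂) ℂ := hρ.sqrt with hR
  have hRherm : Rᴴ = R := hρ.posSemidef_sqrt.1
  have hRR : R * R = ρ := hρ.sqrt_mul_self
  -- basic facts
  have hπherm : Pi1ᴴ = Pi1 := pi_herm φ
  have hππ : Pi1 * Pi1 = Pi1 := pi_mul_pi φ hφ
  have hπtrace : Pi1.trace = 1 := pi_trace φ hφ
  have hPherm : Pᴴ = P := by
    rw [hP, kron_conjTranspose, hπherm, Matrix.conjTranspose_one]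
  have hPP : P * P = P := by
    rw [hP, ← Matrix.mul_kronecker_mul, hππ, Matrix.one_mul]
  have hQherm : Qᴴ = Q := by
    rw [hQ, Matrix.conjTranspose_sub, hPherm, Matrix.conjTranspose_one]
  have hQQ : Q * Q = Q := by
    rw [hQ, show ((1 : Matrix (Fin d₁ × Fin d₂) (Fin d₁ × Fin d₂) ℂ) - P) * (1 - P)
      = 1 - P - P + P * P from by noncomm_ring, hPP]
    abel
  have hQpsd : Q.PosSemidef := by
    have : Q = Qᴴ * Q := by rw [hQherm, hQQ]
    rw [this]; exact Matrix.posSemidef_conjTranspose_mul_self _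
  have hPpsd : P.PosSemidef := by
    have : P = Pᴴ * P := by rw [hPherm, hPP]
    rw [this]; exact Matrix.posSemidef_conjTranspose_mul_self _
  have hσ₂herm : σ₂.IsHermitian := (ptrace1_psd hρ).1
  have hσherm : σᴴ = σ := by
    rw [hσ, kron_conjTranspose, hπherm, hσ₂herm.eq]
  have hσtrace : σ.trace = 1 := by
    rw [hσ, Matrix.trace_kronecker, hπtrace, hσ₂, ptrace1_trace, htr, one_mul]
  -- the difference and its test operator
  have hHherm : (ρ - σ).IsHermitian := by
    rw [Matrix.IsHermitian, Matrix.conjTranspose_sub, hρ.1.eq, hσherm]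
  have hHtrace : (ρ - σ).trace = 0 := by
    rw [Matrix.trace_sub, htr, hσtrace, sub_self]
  obtain ⟨M, hMpsd, hMpsd', hMM, hMkey⟩ := exists_test (ρ - σ) hHherm hHtrace
  have hMherm : Mᴴ = M := hMpsd.1
  have hTD : traceDist ρ σ = ((M * (ρ - σ)).trace).re := by
    change (1 / 2) * ((Matrix.posSemidef_conjTranspose_mul_self (ρ - σ)).sqrt.trace).re = _
    rw [hMkey]; ring
  -- sandwich identity
  have hsand : P * ρ * P = Pi1 ⊗ₖ st := sandwich_eq φ ρ
  -- σ₂ - st is PSD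
  have hsub_eq : σ₂ - st = ptrace1 (Q * ρ * Q) := by
    have eqQ : Q * ρ * Q = (ρ - P * ρ) - (ρ * P - P * ρ * P) := by
      rw [hQ]; noncomm_ring
    rw [eqQ, ptrace1_sub, ptrace1_sub, ptrace1_sub]
    rw [show ptrace1 (P * ρ) = st from ptrace1_P_mul φ ρ]
    rw [show ptrace1 (ρ * P) = st from ptrace1_mul_P φ ρ]
    rw [show ptrace1 (P * ρ * P) = st by
      rw [hsand, ptrace1_kron, hπtrace, one_smul]]
    rw [← hσ₂]
    abel
  have hsubpsd : (σ₂ - st).PosSemidef := by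
    rw [hsub_eq]
    apply ptrace1_psd
    have := hρ.mul_mul_conjTranspose_same Q
    rwa [hQherm] at this
  -- decomposition of ρ - σ
  have hdecomp : ρ - σ = Q * ρ + P * ρ * Q - Pi1 ⊗ₖ (σ₂ - st) := by
    rw [kron_sub, ← hσ, ← hsand, hQ]
    noncomm_ring
  -- trace bounds
  have htrPρ : (P * ρ).trace = (Pi1 * ptrace2 ρ).trace := trace_P_mul φ ρ
  have htrQρ : (Q * ρ).trace = 1 - (P * ρ).trace := by
    rw [hQ, Matrix.sub_mul, Matrix.one_mul, Matrix.trace_sub, htr]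
  have hQρQ_trace : (Q * ρ * Q).trace = (Q * ρ).trace := by
    rw [Matrix.trace_mul_comm, ← Matrix.mul_assoc, hQQ]
  have hQρQpsd : (Q * ρ * Q).PosSemidef := by
    have := hρ.mul_mul_conjTranspose_same Q
    rwa [hQherm] at this
  have hPρPpsd : (P * ρ * P).PosSemidef := by
    have := hρ.mul_mul_conjTranspose_same P
    rwa [hPherm] at this
  have hPρP_trace : (P * ρ * P).trace = (P * ρ).trace := by
    rw [Matrix.trace_mul_comm, ← Matrix.mul_assoc, hPP]
  have hQρ_nonneg : 0 ≤ (Q * ρ).trace.re := by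
    have := psd_trace_re_nonneg hQρQpsd
    rwa [hQρQ_trace] at this
  have hQρ_le : (Q * ρ).trace.re ≤ δ := by
    have : (Q * ρ).trace.re = 1 - (P * ρ).trace.re := by
      rw [htrQρ, Complex.sub_re, Complex.one_re]
    rw [this, htrPρ]
    linarith [h]
  have hPρ_le : (P * ρ).trace.re ≤ 1 := by
    have : (P * ρ).trace.re = 1 - (Q * ρ).trace.re := by
      rw [htrQρ]; simp
    rw [this]
    linarith [hQρ_nonneg]
  have hPρ_nonneg : 0 ≤ (P * ρ).trace.re := by
    have := psd_trace_re_nonneg hPρPpsd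
    rwa [hPρP_trace] at this
  -- term 1 : (M * (Q * ρ)).trace.re ≤ √δ
  have ht1 : ((M * (Q * ρ)).trace).re ≤ Real.sqrt δ := by
    have hAB : (R * Q * M)ᴴ * R = M * (Q * ρ) := by
      rw [Matrix.conjTranspose_mul, Matrix.conjTranspose_mul, hRherm, hQherm, hMherm]
      simp only [Matrix.mul_assoc]
      rw [hRR]
    have hAA : ((R * Q * M)ᴴ * (R * Q * M)).trace.re ≤ δ := by
      have e : (R * Q * M)ᴴ * (R * Q * M) = M * (Q * ρ * Q) * M := by
        rw [Matrix.conjTranspose_mul, Matrix.conjTranspose_mul, hRherm, hQherm, hMherm]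
        simp only [Matrix.mul_assoc]
        rw [← Matrix.mul_assoc R R, hRR]
      have etr : (M * (Q * ρ * Q) * M).trace = ((Q * ρ * Q) * M).trace := by
        rw [Matrix.trace_mul_comm, ← Matrix.mul_assoc, hMM, Matrix.trace_mul_comm]
      have hge : 0 ≤ ((Q * ρ * Q) * (1 - M)).trace.re :=
        psd_mul_trace_re_nonneg hQρQpsd hMpsd'
      have : ((Q * ρ * Q) * (1 - M)).trace = (Q * ρ * Q).trace - ((Q * ρ * Q) * M).trace := by
        rw [Matrix.mul_sub, Matrix.mul_one, Matrix.trace_sub]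
      rw [this, Complex.sub_re] at hge
      rw [e, etr]
      have : (Q * ρ * Q).trace.re ≤ δ := by rw [hQρQ_trace]; exact hQρ_le
      linarith
    have hBB : (Rᴴ * R).trace.re = 1 := by
      rw [hRherm, hRR, htr, Complex.one_re]
    calc ((M * (Q * ρ)).trace).re = (((R * Q * M)ᴴ * R).trace).re := by rw [hAB]
      _ ≤ Real.sqrt (((R * Q * M)ᴴ * (R * Q * M)).trace.re)
          * Real.sqrt ((Rᴴ * R).trace.re) := trace_cs _ _
      _ ≤ Real.sqrt δ * Real.sqrt 1 := by
          apply mul_le_mul (Real.sqrt_le_sqrt hAA) (by rw [hBB]) (Real.sqrt_nonneg _)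
            (Real.sqrt_nonneg _)
      _ = Real.sqrt δ := by rw [Real.sqrt_one, mul_one]
  -- term 2 : (M * (P * ρ * Q)).trace.re ≤ √δ
  have ht2 : ((M * (P * ρ * Q)).trace).re ≤ Real.sqrt δ := by
    have hAB : (R * P * M)ᴴ * (R * Q) = M * (P * ρ * Q) := by
      rw [Matrix.conjTranspose_mul, Matrix.conjTranspose_mul, hRherm, hPherm, hMherm]
      simp only [Matrix.mul_assoc]
      rw [← Matrix.mul_assoc R R, hRR]
    have hAA : ((R * P * M)ᴴ * (R * P * M)).trace.re ≤ 1 := by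
      have e : (R * P * M)ᴴ * (R * P * M) = M * (P * ρ * P) * M := by
        rw [Matrix.conjTranspose_mul, Matrix.conjTranspose_mul, hRherm, hPherm, hMherm]
        simp only [Matrix.mul_assoc]
        rw [← Matrix.mul_assoc R R, hRR]
      have etr : (M * (P * ρ * P) * M).trace = ((P * ρ * P) * M).trace := by
        rw [Matrix.trace_mul_comm, ← Matrix.mul_assoc, hMM, Matrix.trace_mul_comm]
      have hge : 0 ≤ ((P * ρ * P) * (1 - M)).trace.re :=
        psd_mul_trace_re_nonneg hPρPpsd hMpsd'
      have : ((P * ρ * P) * (1 - M)).trace = (P * ρ * P).trace - ((P * ρ * P) * M).trace := by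
        rw [Matrix.mul_sub, Matrix.mul_one, Matrix.trace_sub]
      rw [this, Complex.sub_re] at hge
      rw [e, etr]
      have : (P * ρ * P).trace.re ≤ 1 := by rw [hPρP_trace]; exact hPρ_le
      linarith
    have hBB : ((R * Q)ᴴ * (R * Q)).trace.re ≤ δ := by
      have e : (R * Q)ᴴ * (R * Q) = Q * ρ * Q := by
        rw [Matrix.conjTranspose_mul, hRherm, hQherm]
        simp only [Matrix.mul_assoc]
        rw [← Matrix.mul_assoc R R, hRR]
      rw [e, hQρQ_trace]
      exact hQρ_le
    calc ((M * (P * ρ * Q)).trace).re = (((R * P * M)ᴴ * (R * Q)).trace).re := by rw [hAB]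
      _ ≤ Real.sqrt (((R * P * M)ᴴ * (R * P * M)).trace.re)
          * Real.sqrt (((R * Q)ᴴ * (R * Q)).trace.re) := trace_cs _ _
      _ ≤ Real.sqrt 1 * Real.sqrt δ := by
          apply mul_le_mul (Real.sqrt_le_sqrt hAA) (Real.sqrt_le_sqrt hBB)
            (Real.sqrt_nonneg _) (Real.sqrt_nonneg _)
      _ = Real.sqrt δ := by rw [Real.sqrt_one, one_mul]
  -- term 3 : nonnegative
  have ht3 : 0 ≤ ((M * (Pi1 ⊗ₖ (σ₂ - st))).trace).re :=
    psd_mul_trace_re_nonneg hMpsd (kron_psd (pi_psd φ) hsubpsd)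
  -- assemble
  have hsplit : (M * (ρ - σ)).trace
      = (M * (Q * ρ)).trace + (M * (P * ρ * Q)).trace - (M * (Pi1 ⊗ₖ (σ₂ - st))).trace := by
    rw [hdecomp, Matrix.mul_sub, Matrix.mul_add, Matrix.trace_sub, Matrix.trace_add]
  rw [hTD, hsplit]
  rw [Complex.sub_re, Complex.add_re]
  have hsqrtδ : 0 ≤ Real.sqrt δ := Real.sqrt_nonneg _
  linarith
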